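/- For every n ≥ 4 with n ≡ 1 (mod 3), say n = 3k+1, there exists a pure 2-dimensional simplicial complex on n vertices whose adjacency graph is a path of length at least 2k² + k − 2. In particular H_s(n,3) ≥ (2/9)(n−3)² for all n ≥ 3, where H_s(n,3) is the maximum adjacency-graph diameter of strongly connected pure 2-complexes on n vertices. -/

import Mathlib

open Finset

/-- The adjacency (dual) graph of a pure simplicial complex, given by its set of
facets: two facets are adjacent iff they differ in exactly one element. -/
def adjGraph {V : Type*} [DecidableEq V] (C : Finset (Finset V)) :
    SimpleGraph {X // X ∈ C} where
  Adj X Y := (X.1 \ Y.1).card = 1 ∧ (Y.1 \ X.1).card = 1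
  symm := ⟨fun X Y h => ⟨h.2, h.1⟩⟩
  loopless := ⟨fun X h => by simp at h⟩

/-- `Hs n d` : maximum diameter of the adjacency graph among all strongly
connected pure `(d-1)`-dimensional simplicial complexes on `n` vertices. -/
noncomputable def Hs (n d : ℕ) : ℕ :=
  sSup {δ | ∃ C : Finset (Finset (Fin n)),
    (∀ X ∈ C, X.card = d) ∧ (adjGraph C).Connected ∧ (adjGraph C).diam = δ}

namespace DimTwoAux

/-! ### Arithmetic helpers -/

lemma mod_eq_iff {m a b : ℕ} (hm : 0 < m) (ha : a < 2*m) (hb : b < 2*m) :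
    a % m = b % m ↔ (a = b ∨ a + m = b ∨ b + m = a) := by
  have h3 : a % m < m := Nat.mod_lt _ hm
  have h4 : b % m < m := Nat.mod_lt _ hm
  have hA : a % m = a ∨ a % m + m = a := by
    rcases lt_or_ge a m with h | h
    · left; exact Nat.mod_eq_of_lt h
    · right
      rw [Nat.mod_eq_sub_mod h, Nat.mod_eq_of_lt (by omega)]
      omega
  have hB : b % m = b ∨ b % m + m = b := by
    rcases lt_or_ge b m with h | h
    · left; exact Nat.mod_eq_of_lt h
    · right
      rw [Nat.mod_eq_sub_mod h, Nat.mod_eq_of_lt (by omega)]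
      omega
  constructor
  · intro h; rcases hA with h1|h1 <;> rcases hB with h2|h2 <;> omega
  · intro h; rcases hA with h1|h1 <;> rcases hB with h2|h2 <;> omega

lemma mul_mono_lt {E a b ra rb : ℕ} (hra : ra < E) (hab : a < b) :
    a*E + ra < b*E + rb :=
  calc a*E + ra < a*E + E := by exact Nat.add_lt_add_left hra _
    _ = (a+1)*E := by ring
    _ ≤ b*E := mul_le_mul_left hab E
    _ ≤ b*E + rb := Nat.le_add_right _ _

lemma pair_lt_iff {E q r q' r' : ℕ} (hr : r < E) (hr' : r' < E) :
    q*E + r < q'*E + r' ↔ (q < q' ∨ (q = q' ∧ r < r')) := by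
  constructor
  · intro h
    rcases lt_trichotomy q q' with h1|h1|h1
    · exact Or.inl h1
    · subst h1; right; exact ⟨rfl, by rwa [add_lt_add_iff_left] at h⟩
    · exact absurd h (lt_asymm (mul_mono_lt (rb := r) hr' h1))
  · rintro (h|⟨rfl, h⟩)
    · exact mul_mono_lt (rb := r') hr h
    · rwa [add_lt_add_iff_left]

lemma pair_succ_iff {E q r q' r' : ℕ} (hE : 0 < E) (hr : r < E) (hr' : r' < E) :
    q*E + r + 1 = q'*E + r' ↔ ((q = q' ∧ r + 1 = r') ∨ (q + 1 = q' ∧ r + 1 = E ∧ r' = 0)) := by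
  constructor
  · intro h
    rcases lt_trichotomy q q' with h1|h1|h1
    · right
      have h2 : q + 1 = q' := by
        by_contra h3
        have h5 : (q+2)*E ≤ q'*E := mul_le_mul_left (by omega) E
        have h6 : (q+2)*E = q*E + 2*E := by ring
        have h7 : q'*E ≤ q'*E + r' := Nat.le_add_right _ _
        linarith
      have h8 : (q+1)*E = q*E + E := by ring
      rw [← h2] at h
      have h9 : r + 1 = E + r' := by linarith
      exact ⟨h2, by omega, by omega⟩
    · subst h1
      left
      exact ⟨rfl, by linarith⟩
    · exfalso
      have hkey : q'*E + r' < q*E + r := mul_mono_lt hr' h1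
      linarith
  · rintro (⟨rfl, h⟩ | ⟨h1, h2, h3⟩)
    · linarith
    · subst h3
      have h8 : (q+1)*E = q*E + E := by ring
      rw [← h1]
      linarith

/-! ### The construction: vertices -/

/-- zigzag offset function -/
def cz (k s : ℕ) : ℕ :=
  if s = 0 then 0 else if s % 2 = 0 then k + 1 - s / 2 else k + (s - 1) / 2

/-- the `x`-vertices (apex of each row) -/
def xv (k i : ℕ) : Fin (3*k+1) := ⟨(2*k+1+i) % (3*k+1), Nat.mod_lt _ (by omega)⟩
/-- the `y`-vertices (cyclic part), indexed mod `2k` -/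
def yv (k t : ℕ) : Fin (3*k+1) := ⟨(t % (2*k)) % (3*k+1), Nat.mod_lt _ (by omega)⟩
/-- the special vertex `∞` -/
def iv (k : ℕ) : Fin (3*k+1) := ⟨2*k, by omega⟩
/-- the `s`-th vertex of the Hamiltonian path of row `q` -/
def wv (k q s : ℕ) : Fin (3*k+1) := if s = 1 then iv k else yv k (q + cz k s)

/-- the sequence of triangles -/
def tri (k m : ℕ) : Finset (Fin (3*k+1)) :=
  if m % (2*k+1) = 2*k then
    {xv k (m / (2*k+1)), xv k (m / (2*k+1) + 1), yv k (m / (2*k+1) + 1)}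
  else
    {xv k (m / (2*k+1)), wv k (m / (2*k+1)) (m % (2*k+1)),
      wv k (m / (2*k+1)) (m % (2*k+1) + 1)}

section Main

variable {k : ℕ}

lemma xv_val {i : ℕ} (hi : i < k) : (xv k i).val = 2*k+1+i := by
  simp only [xv]; exact Nat.mod_eq_of_lt (by omega)

lemma yv_val (hk : 1 ≤ k) (t : ℕ) : (yv k t).val = t % (2*k) := by
  have h : t % (2*k) < 2*k := Nat.mod_lt _ (by omega)
  simp only [yv]; exact Nat.mod_eq_of_lt (by omega)

lemma iv_val : (iv k).val = 2*k := rfl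

lemma yv_eq_yv (hk : 1 ≤ k) {a b : ℕ} (ha : a < 4*k) (hb : b < 4*k) :
    yv k a = yv k b ↔ (a = b ∨ a + 2*k = b ∨ b + 2*k = a) := by
  rw [Fin.ext_iff, yv_val hk, yv_val hk, mod_eq_iff (by omega) (by omega) (by omega)]

lemma xv_eq_xv {i j : ℕ} (hi : i < k) (hj : j < k) : xv k i = xv k j ↔ i = j := by
  rw [Fin.ext_iff, xv_val hi, xv_val hj]; omega

lemma xv_ne_yv (hk : 1 ≤ k) {i : ℕ} (hi : i < k) (t : ℕ) : xv k i ≠ yv k t := by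
  rw [Ne, Fin.ext_iff, xv_val hi, yv_val hk]
  have h : t % (2*k) < 2*k := Nat.mod_lt _ (by omega)
  omega

lemma xv_ne_iv {i : ℕ} (hi : i < k) : xv k i ≠ iv k := by
  rw [Ne, Fin.ext_iff, xv_val hi, iv_val]; omega

lemma yv_ne_iv (hk : 1 ≤ k) (t : ℕ) : yv k t ≠ iv k := by
  rw [Ne, Fin.ext_iff, yv_val hk, iv_val]
  have h : t % (2*k) < 2*k := Nat.mod_lt _ (by omega)
  omega

lemma xv_ne_wv (hk : 1 ≤ k) {i : ℕ} (hi : i < k) (q s : ℕ) : xv k i ≠ wv k q s := by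
  unfold wv; split
  · exact xv_ne_iv hi
  · exact xv_ne_yv hk hi _

lemma wv_one (q : ℕ) : wv k q 1 = iv k := rfl

lemma wv_zero (q : ℕ) : wv k q 0 = yv k q := rfl

/-! ### Properties of the offset function -/

lemma cz_le (hk : 1 ≤ k) {s : ℕ} (hs : s ≤ 2*k) : cz k s ≤ 2*k - 1 := by
  unfold cz; split_ifs <;> omega

lemma cz_inj (hk : 1 ≤ k) {s s' : ℕ} (hs : s ≤ 2*k) (hs' : s' ≤ 2*k)
    (h1 : s ≠ 1) (h1' : s' ≠ 1) (h : cz k s = cz k s') : s = s' := by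
  unfold cz at h; split_ifs at h <;> omega

lemma cz_eq_zero (hk : 1 ≤ k) {s : ℕ} (hs : s ≤ 2*k) (h1 : s ≠ 1) :
    cz k s = 0 ↔ s = 0 := by
  unfold cz
  constructor
  · intro h; split_ifs at h <;> omega
  · intro h; split_ifs <;> omega

lemma cz_eq_one (hk : 1 ≤ k) {s : ℕ} (hs : s ≤ 2*k) (h1 : s ≠ 1) :
    cz k s = 1 ↔ s = 2*k := by
  unfold cz
  constructor
  · intro h; split_ifs at h <;> omega
  · intro h; split_ifs <;> omega

lemma cz_sum (hk : 1 ≤ k) {s : ℕ} (h2 : 2 ≤ s) (hs : s + 1 ≤ 2*k) :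
    cz k s + cz k (s+1) = 2*k ∨ cz k s + cz k (s+1) = 2*k + 1 := by
  rcases Nat.even_or_odd s with ⟨t, ht⟩ | ⟨t, ht⟩
  · right
    have h1 : cz k s = k + 1 - t := by
      unfold cz
      rw [if_neg (by omega), if_pos (by omega)]
      have hs2 : s / 2 = t := by omega
      rw [hs2]
    have h2 : cz k (s+1) = k + t := by
      unfold cz
      rw [if_neg (by omega), if_neg (by omega)]
      have hs2 : (s+1-1) / 2 = t := by omega
      rw [hs2]
    rw [h1, h2]
    have htk : t ≤ k := by omega
    omega
  · left
    have h1 : cz k s = k + t := by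
      unfold cz
      rw [if_neg (by omega), if_neg (by omega)]
      have hs2 : (s-1) / 2 = t := by omega
      rw [hs2]
    have h2 : cz k (s+1) = k + 1 - (t+1) := by
      unfold cz
      rw [if_neg (by omega), if_pos (by omega)]
      have hs2 : (s+1) / 2 = t + 1 := by omega
      rw [hs2]
    rw [h1, h2]
    have htk : t + 1 ≤ k := by omega
    omega

/-! ### Vertex coincidence lemmas -/

lemma wv_eq_wv (hk : 1 ≤ k) {q q' s s' : ℕ} (hq : q < k) (hq' : q' < k)
    (hs : s ≤ 2*k) (hs' : s' ≤ 2*k) :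
    wv k q s = wv k q' s' ↔
      ((s = 1 ∧ s' = 1) ∨ (s ≠ 1 ∧ s' ≠ 1 ∧
        (q + cz k s = q' + cz k s' ∨ q + cz k s + 2*k = q' + cz k s' ∨
          q' + cz k s' + 2*k = q + cz k s))) := by
  rcases eq_or_ne s 1 with rfl | h1
  · rcases eq_or_ne s' 1 with rfl | h1'
    · rw [wv_one, wv_one]
      constructor
      · intro _; exact Or.inl ⟨rfl, rfl⟩
      · intro _; rfl
    · rw [wv_one]; unfold wv; rw [if_neg h1']
      constructor
      · intro h; exact absurd h.symm (yv_ne_iv hk _)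
      · rintro (⟨_, h⟩ | ⟨h, _, _⟩)
        · exact absurd h h1'
        · exact absurd rfl h
  · rcases eq_or_ne s' 1 with rfl | h1'
    · unfold wv; rw [if_neg h1, if_pos rfl]
      constructor
      · intro h; exact absurd h (yv_ne_iv hk _)
      · rintro (⟨h, _⟩ | ⟨_, h, _⟩)
        · exact absurd h h1
        · exact absurd rfl h
    · unfold wv; rw [if_neg h1, if_neg h1']
      have hb := cz_le hk hs
      have hb' := cz_le hk hs'
      rw [yv_eq_yv hk (by omega) (by omega)]
      constructor
      · intro h; exact Or.inr ⟨h1, h1', h⟩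
      · rintro (⟨h, _⟩ | ⟨_, _, h⟩)
        · exact absurd h h1
        · exact h

lemma wv_inj (hk : 1 ≤ k) {q s s' : ℕ} (hq : q < k) (hs : s ≤ 2*k) (hs' : s' ≤ 2*k) :
    wv k q s = wv k q s' ↔ s = s' := by
  rw [wv_eq_wv hk hq hq hs hs']
  constructor
  · rintro (⟨rfl, rfl⟩ | ⟨h1, h1', h⟩)
    · rfl
    · have hb := cz_le hk hs
      have hb' := cz_le hk hs'
      have hcc : cz k s = cz k s' := by omega
      exact cz_inj hk hs hs' h1 h1' hcc
  · rintro rfl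
    rcases eq_or_ne s 1 with rfl | h
    · exact Or.inl ⟨rfl, rfl⟩
    · exact Or.inr ⟨h, h, Or.inl rfl⟩

lemma wv_eq_next (hk : 1 ≤ k) {q s : ℕ} (hq : q < k) (hs : s ≤ 2*k) :
    wv k q s = yv k (q+1) ↔ s = 2*k := by
  unfold wv; split_ifs with h
  · constructor
    · intro hh; exact absurd hh.symm (yv_ne_iv hk _)
    · intro hh; omega
  · have hb := cz_le hk hs
    rw [yv_eq_yv hk (by omega) (by omega)]
    constructor
    · intro hh
      have h1 : cz k s = 1 := by omega
      exact (cz_eq_one hk hs h).mp h1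
    · rintro rfl
      have h1 : cz k (2*k) = 1 := (cz_eq_one hk le_rfl (by omega)).mpr rfl
      omega

lemma wv_eq_start (hk : 1 ≤ k) {q s : ℕ} (hq : q < k) (hs : s ≤ 2*k) :
    wv k q s = yv k q ↔ s = 0 := by
  unfold wv; split_ifs with h
  · constructor
    · intro hh; exact absurd hh.symm (yv_ne_iv hk _)
    · intro hh; omega
  · have hb := cz_le hk hs
    rw [yv_eq_yv hk (by omega) (by omega)]
    constructor
    · intro hh
      have h1 : cz k s = 0 := by omega
      exact (cz_eq_zero hk hs h).mp h1
    · rintro rfl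
      left
      have h1 : cz k 0 = 0 := rfl
      omega

/-- the key edge-disjointness property of the Walecki paths -/
lemma edges_disjoint (hk : 1 ≤ k) {q q' r r' : ℕ} (hq : q < k) (hq' : q' < k) (hne : q ≠ q')
    (hr : r + 1 ≤ 2*k) (hr' : r' + 1 ≤ 2*k)
    (h : (wv k q r = wv k q' r' ∧ wv k q (r+1) = wv k q' (r'+1)) ∨
         (wv k q r = wv k q' (r'+1) ∧ wv k q (r+1) = wv k q' r')) : False := by
  have hcz2 : cz k (1+1) = k := by unfold cz; norm_num
  have hcz0 : cz k 0 = 0 := rfl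
  rcases h with ⟨h1, h2⟩ | ⟨h1, h2⟩
  · rw [wv_eq_wv hk hq hq' (by omega) (by omega)] at h1
    rw [wv_eq_wv hk hq hq' (by omega) (by omega)] at h2
    rcases h1 with ⟨e1, e1'⟩ | ⟨n1, n1', c1⟩
    · subst e1; subst e1'
      rcases h2 with ⟨e2, _⟩ | ⟨_, _, c2⟩
      · omega
      · have hb : cz k (1+1) ≤ 2*k - 1 := cz_le hk (by omega)
        omega
    · rcases h2 with ⟨e2, e2'⟩ | ⟨n2, n2', c2⟩
      · -- r + 1 = 1 and r' + 1 = 1, so r = r' = 0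
        have hr0 : r = 0 := by omega
        have hr'0 : r' = 0 := by omega
        subst hr0; subst hr'0
        omega
      · have h2r : 2 ≤ r := by omega
        have h2r' : 2 ≤ r' := by omega
        have hs1 := cz_sum hk h2r (by omega)
        have hs2 := cz_sum hk h2r' (by omega)
        have b1 : cz k r ≤ 2*k-1 := cz_le hk (by omega)
        have b2 : cz k (r+1) ≤ 2*k-1 := cz_le hk hr
        have b3 : cz k r' ≤ 2*k-1 := cz_le hk (by omega)
        have b4 : cz k (r'+1) ≤ 2*k-1 := cz_le hk hr'
        omega
  · rw [wv_eq_wv hk hq hq' (by omega) (by omega)] at h1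
    rw [wv_eq_wv hk hq hq' (by omega) (by omega)] at h2
    rcases h1 with ⟨e1, e1'⟩ | ⟨n1, n1', c1⟩
    · -- r = 1 and r' + 1 = 1, so r' = 0
      have hr'0 : r' = 0 := by omega
      subst e1; subst hr'0
      rcases h2 with ⟨e2, _⟩ | ⟨_, _, c2⟩
      · omega
      · omega
    · rcases h2 with ⟨e2, e2'⟩ | ⟨n2, n2', c2⟩
      · -- r + 1 = 1 and r' = 1 : r = 0, r' = 1
        have hr0 : r = 0 := by omega
        subst hr0; subst e2'
        omega
      · have h2r : 2 ≤ r := by omega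
        have h2r' : 2 ≤ r' := by omega
        have hs1 := cz_sum hk h2r (by omega)
        have hs2 := cz_sum hk h2r' (by omega)
        have b1 : cz k r ≤ 2*k-1 := cz_le hk (by omega)
        have b2 : cz k (r+1) ≤ 2*k-1 := cz_le hk hr
        have b3 : cz k r' ≤ 2*k-1 := cz_le hk (by omega)
        have b4 : cz k (r'+1) ≤ 2*k-1 := cz_le hk hr'
        omega

/-! ### Shapes of the triangles -/

lemma tri_row (k q r : ℕ) (hr : r < 2*k) :
    tri k (q*(2*k+1)+r) = {xv k q, wv k q r, wv k q (r+1)} := by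
  have h1 : (q*(2*k+1)+r) % (2*k+1) = r := by
    rw [Nat.add_comm, Nat.add_mul_mod_self_right, Nat.mod_eq_of_lt (by omega)]
  have h2 : (q*(2*k+1)+r) / (2*k+1) = q := by
    rw [Nat.add_comm, Nat.add_mul_div_right _ _ (by omega : 0 < 2*k+1),
      Nat.div_eq_of_lt (by omega), Nat.zero_add]
  unfold tri
  rw [h1, h2, if_neg (by omega)]

lemma tri_B (k q : ℕ) (hk : 1 ≤ k) :
    tri k (q*(2*k+1)+2*k) = {xv k q, xv k (q+1), yv k (q+1)} := by
  have h1 : (q*(2*k+1)+2*k) % (2*k+1) = 2*k := by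
    rw [Nat.add_comm, Nat.add_mul_mod_self_right, Nat.mod_eq_of_lt (by omega)]
  have h2 : (q*(2*k+1)+2*k) / (2*k+1) = q := by
    rw [Nat.add_comm, Nat.add_mul_div_right _ _ (by omega : 0 < 2*k+1),
      Nat.div_eq_of_lt (by omega), Nat.zero_add]
  unfold tri
  rw [h1, h2, if_pos rfl]

lemma card3 {V : Type*} [DecidableEq V] {A B C : V} (h1 : A ≠ B) (h2 : A ≠ C) (h3 : B ≠ C) :
    ({A, B, C} : Finset V).card = 3 := by
  rw [card_insert_of_notMem (by simp [h1, h2]),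
    card_insert_of_notMem (by simp [h3]), card_singleton]

lemma tri_card (hk : 1 ≤ k) {q r : ℕ} (hq : q < k) (hr : r ≤ 2*k) (hB : r = 2*k → q+1 < k) :
    (tri k (q*(2*k+1)+r)).card = 3 := by
  rcases eq_or_ne r (2*k) with rfl | hr2
  · rw [tri_B k q hk]
    exact card3 (by rw [Ne, xv_eq_xv hq (hB rfl)]; omega)
      (xv_ne_yv hk hq _) (xv_ne_yv hk (hB rfl) _)
  · rw [tri_row k q r (by omega)]
    exact card3 (xv_ne_wv hk hq _ _) (xv_ne_wv hk hq _ _)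
      (by rw [Ne, wv_inj hk hq (by omega) (by omega)]; omega)

/-! ### Generic set computations -/

lemma sdiff_pair {V : Type*} [DecidableEq V] {A B C D : V}
    (hAB : A ≠ B) (hAC : A ≠ C) (hAD : A ≠ D) (hDB : D ≠ B) (hDC : D ≠ C) :
    (({A, B, C} : Finset V) \ {B, C, D}).card = 1 ∧
    (({B, C, D} : Finset V) \ {A, B, C}).card = 1 := by
  have e1 : ({A, B, C} : Finset V) \ {B, C, D} = {A} := by
    ext z
    simp only [mem_sdiff, mem_insert, mem_singleton]
    constructor
    · rintro ⟨h1 | h1 | h1, h2⟩ <;> tauto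
    · rintro rfl
      refine ⟨Or.inl rfl, ?_⟩
      push_neg
      exact ⟨hAB, hAC, hAD⟩
  have e2 : ({B, C, D} : Finset V) \ {A, B, C} = {D} := by
    ext z
    simp only [mem_sdiff, mem_insert, mem_singleton]
    constructor
    · rintro ⟨h1 | h1 | h1, h2⟩ <;> tauto
    · rintro rfl
      refine ⟨by tauto, ?_⟩
      push_neg
      exact ⟨fun h => hAD h.symm, hDB, hDC⟩
  rw [e1, e2, card_singleton, card_singleton]
  exact ⟨rfl, rfl⟩

lemma inter_one {V : Type*} [DecidableEq V] {X Y : Finset V} (e : V)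
    (h : ∀ z ∈ X, z ∈ Y → z = e) : (X ∩ Y).card ≤ 1 := by
  have hsub : X ∩ Y ⊆ {e} := by
    intro z hz
    rw [mem_inter] at hz
    rw [mem_singleton]
    exact h z hz.1 hz.2
  calc (X ∩ Y).card ≤ ({e} : Finset V).card := card_le_card hsub
    _ = 1 := card_singleton e

/-! ### Adjacency of consecutive triangles -/

lemma adj1 (hk : 1 ≤ k) {q r : ℕ} (hq : q < k) (h : r + 2 ≤ 2*k) :
    (tri k (q*(2*k+1)+r) \ tri k (q*(2*k+1)+(r+1))).card = 1 ∧
    (tri k (q*(2*k+1)+(r+1)) \ tri k (q*(2*k+1)+r)).card = 1 := by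
  rw [tri_row k q r (by omega), tri_row k q (r+1) (by omega)]
  have hc : ({xv k q, wv k q r, wv k q (r+1)} : Finset (Fin (3*k+1)))
      = {wv k q r, xv k q, wv k q (r+1)} := by
    ext z; simp only [mem_insert, mem_singleton]; tauto
  rw [hc]
  exact sdiff_pair
    ((xv_ne_wv hk hq q r).symm)
    (by rw [Ne, wv_inj hk hq (by omega) (by omega)]; omega)
    (by rw [Ne, wv_inj hk hq (by omega) (by omega)]; omega)
    ((xv_ne_wv hk hq q (r+1+1)).symm)
    (by rw [Ne, wv_inj hk hq (by omega) (by omega)]; omega)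

lemma adj2 (hk : 1 ≤ k) {q r : ℕ} (hq : q < k) (hq1 : q+1 < k) (h : r + 1 = 2*k) :
    (tri k (q*(2*k+1)+r) \ tri k (q*(2*k+1)+(r+1))).card = 1 ∧
    (tri k (q*(2*k+1)+(r+1)) \ tri k (q*(2*k+1)+r)).card = 1 := by
  rw [tri_row k q r (by omega), show q*(2*k+1)+(r+1) = q*(2*k+1)+2*k by omega,
    tri_B k q hk]
  have hw : wv k q (r+1) = yv k (q+1) := by
    rw [h]; exact (wv_eq_next hk hq le_rfl).mpr rfl
  rw [hw]
  have hX : ({xv k q, wv k q r, yv k (q+1)} : Finset (Fin (3*k+1)))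
      = {wv k q r, xv k q, yv k (q+1)} := by
    ext z; simp only [mem_insert, mem_singleton]; tauto
  have hY : ({xv k q, xv k (q+1), yv k (q+1)} : Finset (Fin (3*k+1)))
      = {xv k q, yv k (q+1), xv k (q+1)} := by
    ext z; simp only [mem_insert, mem_singleton]; tauto
  rw [hX, hY]
  refine sdiff_pair ?_ ?_ ?_ ?_ ?_
  · exact (xv_ne_wv hk hq q r).symm
  · rw [Ne, wv_eq_next hk hq (by omega)]; omega
  · exact (xv_ne_wv hk hq1 q r).symm
  · intro hh; exact absurd ((xv_eq_xv hq1 hq).mp hh) (by omega)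
  · exact xv_ne_yv hk hq1 _

lemma adj3 (hk : 1 ≤ k) {q : ℕ} (hq1 : q+1 < k) :
    (tri k (q*(2*k+1)+2*k) \ tri k ((q+1)*(2*k+1)+0)).card = 1 ∧
    (tri k ((q+1)*(2*k+1)+0) \ tri k (q*(2*k+1)+2*k)).card = 1 := by
  rw [tri_B k q hk, tri_row k (q+1) 0 (by omega)]
  rw [show (0:ℕ)+1 = 1 from rfl, wv_zero, wv_one]
  refine sdiff_pair ?_ ?_ ?_ ?_ ?_
  · intro hh; exact absurd ((xv_eq_xv (by omega) hq1).mp hh) (by omega)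
  · exact xv_ne_yv hk (by omega) _
  · exact xv_ne_iv (by omega)
  · exact (xv_ne_iv hq1).symm
  · exact (yv_ne_iv hk _).symm

/-! ### Non-adjacency of non-consecutive triangles -/

lemma inter_small (hk : 1 ≤ k) {q r q' r' : ℕ} (hq : q < k) (hq' : q' < k)
    (hr : r ≤ 2*k) (hr' : r' ≤ 2*k) (hBq : r = 2*k → q+1 < k) (hBq' : r' = 2*k → q'+1 < k)
    (hord : q < q' ∨ (q = q' ∧ r < r'))
    (hnc1 : ¬(q = q' ∧ r + 1 = r')) (hnc2 : ¬(q + 1 = q' ∧ r = 2*k ∧ r' = 0)) :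
    (tri k (q*(2*k+1)+r) ∩ tri k (q'*(2*k+1)+r')).card ≤ 1 := by
  by_cases hA : r = 2*k
  · have hq1 := hBq hA
    subst hA
    rw [tri_B k q hk]
    by_cases hA' : r' = 2*k
    · have hq1' := hBq' hA'
      subst hA'
      rw [tri_B k q' hk]
      have hqq' : q < q' := by omega
      apply inter_one (xv k (q+1))
      intro z hz1 hz2
      simp only [mem_insert, mem_singleton] at hz1 hz2
      rcases hz1 with rfl | rfl | rfl
      · rcases hz2 with h | h | h
        · exact absurd ((xv_eq_xv hq hq').mp h) (by omega)
        · exact absurd ((xv_eq_xv hq hq1').mp h) (by omega)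
        · exact absurd h (xv_ne_yv hk hq _)
      · rfl
      · rcases hz2 with h | h | h
        · exact absurd h.symm (xv_ne_yv hk hq' _)
        · exact absurd h.symm (xv_ne_yv hk hq1' _)
        · have := (yv_eq_yv hk (by omega) (by omega)).mp h
          omega
    · rw [tri_row k q' r' (by omega)]
      have hqlt : q < q' := by omega
      by_cases hstep : q' = q+1
      · have hr'0 : r' ≠ 0 := by
          intro h0; exact hnc2 ⟨by omega, rfl, h0⟩
        apply inter_one (xv k (q+1))
        intro z hz1 hz2
        simp only [mem_insert, mem_singleton] at hz1 hz2
        rcases hz1 with rfl | rfl | rfl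
        · rcases hz2 with h | h | h
          · exact absurd ((xv_eq_xv hq hq').mp h) (by omega)
          · exact absurd h (xv_ne_wv hk hq _ _)
          · exact absurd h (xv_ne_wv hk hq _ _)
        · rfl
        · rcases hz2 with h | h | h
          · exact absurd h.symm (xv_ne_yv hk hq' _)
          · rw [hstep] at h
            have := (wv_eq_start hk (hstep ▸ hq') (by omega)).mp h.symm
            exact absurd this hr'0
          · rw [hstep] at h
            have := (wv_eq_start hk (hstep ▸ hq') (by omega)).mp h.symm
            omega
      · apply inter_one (yv k (q+1))
        intro z hz1 hz2
        simp only [mem_insert, mem_singleton] at hz1 hz2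
        rcases hz1 with rfl | rfl | rfl
        · rcases hz2 with h | h | h
          · exact absurd ((xv_eq_xv hq hq').mp h) (by omega)
          · exact absurd h (xv_ne_wv hk hq _ _)
          · exact absurd h (xv_ne_wv hk hq _ _)
        · rcases hz2 with h | h | h
          · exact absurd ((xv_eq_xv hq1 hq').mp h) (by omega)
          · exact absurd h (xv_ne_wv hk hq1 _ _)
          · exact absurd h (xv_ne_wv hk hq1 _ _)
        · rfl
  · rw [tri_row k q r (by omega)]
    by_cases hA' : r' = 2*k
    · have hq1' := hBq' hA'
      subst hA'
      rw [tri_B k q' hk]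
      by_cases hqq : q = q'
      · subst hqq
        have hrr : r + 1 < 2*k := by
          have h1 : r + 1 ≠ 2*k := fun hh => hnc1 ⟨rfl, hh⟩
          omega
        apply inter_one (xv k q)
        intro z hz1 hz2
        simp only [mem_insert, mem_singleton] at hz1 hz2
        rcases hz1 with rfl | rfl | rfl
        · rfl
        · rcases hz2 with h | h | h
          · exact absurd h.symm (xv_ne_wv hk hq _ _)
          · exact absurd h.symm (xv_ne_wv hk hq1' _ _)
          · have := (wv_eq_next hk hq (by omega)).mp h
            omega
        · rcases hz2 with h | h | h
          · exact absurd h.symm (xv_ne_wv hk hq _ _)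
          · exact absurd h.symm (xv_ne_wv hk hq1' _ _)
          · have := (wv_eq_next hk hq (by omega)).mp h
            omega
      · have hqlt : q < q' := by omega
        apply inter_one (yv k (q'+1))
        intro z hz1 hz2
        simp only [mem_insert, mem_singleton] at hz1 hz2
        rcases hz1 with rfl | rfl | rfl
        · rcases hz2 with h | h | h
          · exact absurd ((xv_eq_xv hq hq').mp h) (by omega)
          · exact absurd ((xv_eq_xv hq hq1').mp h) (by omega)
          · exact absurd h (xv_ne_yv hk hq _)
        · rcases hz2 with h | h | h
          · exact absurd h.symm (xv_ne_wv hk hq' _ _)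
          · exact absurd h.symm (xv_ne_wv hk hq1' _ _)
          · exact h
        · rcases hz2 with h | h | h
          · exact absurd h.symm (xv_ne_wv hk hq' _ _)
          · exact absurd h.symm (xv_ne_wv hk hq1' _ _)
          · exact h
    · rw [tri_row k q' r' (by omega)]
      by_cases hqq : q = q'
      · subst hqq
        have hrr : r + 2 ≤ r' := by omega
        apply inter_one (xv k q)
        intro z hz1 hz2
        simp only [mem_insert, mem_singleton] at hz1 hz2
        rcases hz1 with rfl | rfl | rfl
        · rfl
        · rcases hz2 with h | h | h
          · exact absurd h.symm (xv_ne_wv hk hq _ _)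
          · have := (wv_inj hk hq (by omega) (by omega)).mp h
            omega
          · have := (wv_inj hk hq (by omega) (by omega)).mp h
            omega
        · rcases hz2 with h | h | h
          · exact absurd h.symm (xv_ne_wv hk hq _ _)
          · have := (wv_inj hk hq (by omega) (by omega)).mp h
            omega
          · have := (wv_inj hk hq (by omega) (by omega)).mp h
            omega
      · -- two different rows: edge-disjointness
        rw [← not_lt]
        intro hcard
        obtain ⟨z1, hz1, z2, hz2, hz12⟩ := Finset.one_lt_card.mp hcard
        rw [mem_inter] at hz1 hz2
        obtain ⟨hz1X, hz1Y⟩ := hz1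
        obtain ⟨hz2X, hz2Y⟩ := hz2
        simp only [mem_insert, mem_singleton] at hz1X hz1Y hz2X hz2Y
        have hX1 : z1 = wv k q r ∨ z1 = wv k q (r+1) := by
          rcases hz1X with rfl | h | h
          · rcases hz1Y with h | h | h
            · exact absurd ((xv_eq_xv hq hq').mp h) hqq
            · exact absurd h (xv_ne_wv hk hq _ _)
            · exact absurd h (xv_ne_wv hk hq _ _)
          · exact Or.inl h
          · exact Or.inr h
        have hY1 : z1 = wv k q' r' ∨ z1 = wv k q' (r'+1) := by
          rcases hz1Y with rfl | h | h
          · rcases hX1 with h | h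
            · exact absurd h (xv_ne_wv hk hq' _ _)
            · exact absurd h (xv_ne_wv hk hq' _ _)
          · exact Or.inl h
          · exact Or.inr h
        have hX2 : z2 = wv k q r ∨ z2 = wv k q (r+1) := by
          rcases hz2X with rfl | h | h
          · rcases hz2Y with h | h | h
            · exact absurd ((xv_eq_xv hq hq').mp h) hqq
            · exact absurd h (xv_ne_wv hk hq _ _)
            · exact absurd h (xv_ne_wv hk hq _ _)
          · exact Or.inl h
          · exact Or.inr h
        have hY2 : z2 = wv k q' r' ∨ z2 = wv k q' (r'+1) := by
          rcases hz2Y with rfl | h | h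
          · rcases hX2 with h | h
            · exact absurd h (xv_ne_wv hk hq' _ _)
            · exact absurd h (xv_ne_wv hk hq' _ _)
          · exact Or.inl h
          · exact Or.inr h
        rcases hX1 with h1 | h1 <;> rcases hY1 with g1 | g1 <;>
          rcases hX2 with h2 | h2 <;> rcases hY2 with g2 | g2 <;>
          first
          | exact hz12 (h1.trans h2.symm)
          | exact hz12 (g1.trans g2.symm)
          | exact edges_disjoint hk hq hq' hqq (by omega) (by omega)
              (Or.inl ⟨h1.symm.trans g1, h2.symm.trans g2⟩)
          | exact edges_disjoint hk hq hq' hqq (by omega) (by omega)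
              (Or.inr ⟨h1.symm.trans g1, h2.symm.trans g2⟩)
          | exact edges_disjoint hk hq hq' hqq (by omega) (by omega)
              (Or.inr ⟨h2.symm.trans g2, h1.symm.trans g1⟩)
          | exact edges_disjoint hk hq hq' hqq (by omega) (by omega)
              (Or.inl ⟨h2.symm.trans g2, h1.symm.trans g1⟩)

/-! ### Range decomposition -/

lemma range_decomp (hk : 1 ≤ k) {m : ℕ} (hm : m ≤ k*(2*k+1)-2) :
    ∃ q r, m = q*(2*k+1)+r ∧ r ≤ 2*k ∧ q < k ∧ (r = 2*k → q+1 < k) := by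
  have hd : m = m / (2*k+1) * (2*k+1) + m % (2*k+1) := by
    rw [Nat.mul_comm]
    exact (Nat.div_add_mod m (2*k+1)).symm
  have hrlt : m % (2*k+1) < 2*k+1 := Nat.mod_lt _ (by omega)
  have h3 : 2*k+1 ≤ k*(2*k+1) := Nat.le_mul_of_pos_left _ (by omega)
  have hqlt : m / (2*k+1) < k := by
    rw [Nat.div_lt_iff_lt_mul (by omega : 0 < 2*k+1)]
    generalize hP : k*(2*k+1) = P at hm h3 ⊢
    omega
  have hB : m % (2*k+1) = 2*k → m / (2*k+1) + 1 < k := by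
    intro hr2
    by_contra hq2
    push_neg at hq2
    have hq3 : m / (2*k+1) = k - 1 := by omega
    rw [hq3, hr2] at hd
    have hsplit : (k-1)*(2*k+1) + (2*k+1) = k*(2*k+1) := by
      have h5 : k - 1 + 1 = k := by omega
      calc (k-1)*(2*k+1) + (2*k+1) = (k-1+1)*(2*k+1) := by ring
        _ = k*(2*k+1) := by rw [h5]
    generalize hP : k*(2*k+1) = P at hm hsplit
    generalize hQ : (k-1)*(2*k+1) = Q at hd hsplit
    omega
  exact ⟨_, _, hd, by omega, hqlt, hB⟩

lemma tri_card' (hk : 1 ≤ k) {m : ℕ} (hm : m ≤ k*(2*k+1)-2) : (tri k m).card = 3 := by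
  obtain ⟨q, r, rfl, hr, hq, hB⟩ := range_decomp hk hm
  exact tri_card hk hq hr hB

/-! ### The main characterization -/

theorem tri_main (hk : 1 ≤ k) {m m' : ℕ} (hm : m ≤ k*(2*k+1)-2) (hm' : m' ≤ k*(2*k+1)-2) :
    ((tri k m \ tri k m').card = 1 ∧ (tri k m' \ tri k m).card = 1) ↔
      (m + 1 = m' ∨ m' + 1 = m) := by
  obtain ⟨q, r, rfl, hr, hq, hBq⟩ := range_decomp hk hm
  obtain ⟨q', r', rfl, hr', hq', hBq'⟩ := range_decomp hk hm'
  constructor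
  · intro hLHS
    by_contra hnc
    push_neg at hnc
    obtain ⟨hnc1, hnc2⟩ := hnc
    rcases lt_trichotomy (q*(2*k+1)+r) (q'*(2*k+1)+r') with hlt | heq | hgt
    · have hord := (pair_lt_iff (by omega) (by omega)).mp hlt
      have hn1 : ¬(q = q' ∧ r + 1 = r') := by
        intro hc
        exact hnc1 ((pair_succ_iff (by omega) (by omega) (by omega)).mpr (Or.inl hc))
      have hn2 : ¬(q + 1 = q' ∧ r = 2*k ∧ r' = 0) := by
        intro hc
        exact hnc1 ((pair_succ_iff (by omega) (by omega) (by omega)).mpr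
          (Or.inr ⟨hc.1, by omega, hc.2.2⟩))
      have hsmall := inter_small hk hq hq' hr hr' hBq hBq' hord hn1 hn2
      have h3 := tri_card hk hq hr hBq
      have hsd := Finset.card_sdiff_add_card_inter (tri k (q*(2*k+1)+r)) (tri k (q'*(2*k+1)+r'))
      omega
    · obtain ⟨h1, _⟩ := hLHS
      rw [heq, Finset.sdiff_self, Finset.card_empty] at h1
      exact absurd h1 (by norm_num)
    · have hord := (pair_lt_iff (by omega) (by omega)).mp hgt
      have hn1 : ¬(q' = q ∧ r' + 1 = r) := by
        intro hc
        exact hnc2 ((pair_succ_iff (by omega) (by omega) (by omega)).mpr (Or.inl hc))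
      have hn2 : ¬(q' + 1 = q ∧ r' = 2*k ∧ r = 0) := by
        intro hc
        exact hnc2 ((pair_succ_iff (by omega) (by omega) (by omega)).mpr
          (Or.inr ⟨hc.1, by omega, hc.2.2⟩))
      have hsmall := inter_small hk hq' hq hr' hr hBq' hBq hord hn1 hn2
      have h3 := tri_card hk hq' hr' hBq'
      have hsd := Finset.card_sdiff_add_card_inter (tri k (q'*(2*k+1)+r')) (tri k (q*(2*k+1)+r))
      omega
  · rintro (h | h)
    · have hc := (pair_succ_iff (by omega : 0 < 2*k+1) (by omega) (by omega)).mp h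
      rcases hc with ⟨hq2, hr2⟩ | ⟨hq2, hr2, hr3⟩
      · subst hq2; subst hr2
        rcases eq_or_ne (r+1) (2*k) with he | hne2
        · exact adj2 hk hq (hBq' (by omega)) he
        · exact adj1 hk hq (by omega)
      · subst hr3
        have hr4 : r = 2*k := by omega
        subst hr4
        subst hq2
        exact adj3 hk hq'
    · have hc := (pair_succ_iff (by omega : 0 < 2*k+1) (by omega) (by omega)).mp h
      rcases hc with ⟨hq2, hr2⟩ | ⟨hq2, hr2, hr3⟩
      · subst hq2; subst hr2
        rcases eq_or_ne (r'+1) (2*k) with he | hne2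
        · obtain ⟨a, b⟩ := adj2 (q := q') (r := r') hk hq' (hBq (by omega)) he
          exact ⟨b, a⟩
        · obtain ⟨a, b⟩ := adj1 (q := q') (r := r') hk hq' (by omega)
          exact ⟨b, a⟩
      · subst hr3
        have hr4 : r' = 2*k := by omega
        subst hr4
        subst hq2
        obtain ⟨a, b⟩ := adj3 hk hq
        exact ⟨b, a⟩

theorem tri_ne (hk : 1 ≤ k) {m m' : ℕ} (hm : m ≤ k*(2*k+1)-2) (hm' : m' ≤ k*(2*k+1)-2)
    (hne : m ≠ m') : tri k m ≠ tri k m' := by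
  intro h
  by_cases hcons : (m + 1 = m' ∨ m' + 1 = m)
  · have h1 := ((tri_main hk hm hm').mpr hcons).1
    rw [h, Finset.sdiff_self, Finset.card_empty] at h1
    exact absurd h1 (by norm_num)
  · push_neg at hcons
    obtain ⟨hnc1, hnc2⟩ := hcons
    obtain ⟨q, r, rfl, hr, hq, hBq⟩ := range_decomp hk hm
    obtain ⟨q', r', rfl, hr', hq', hBq'⟩ := range_decomp hk hm'
    rcases lt_trichotomy (q*(2*k+1)+r) (q'*(2*k+1)+r') with hlt | heq | hgt
    · have hord := (pair_lt_iff (by omega) (by omega)).mp hlt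
      have hn1 : ¬(q = q' ∧ r + 1 = r') := by
        intro hc
        exact hnc1 ((pair_succ_iff (by omega) (by omega) (by omega)).mpr (Or.inl hc))
      have hn2 : ¬(q + 1 = q' ∧ r = 2*k ∧ r' = 0) := by
        intro hc
        exact hnc1 ((pair_succ_iff (by omega) (by omega) (by omega)).mpr
          (Or.inr ⟨hc.1, by omega, hc.2.2⟩))
      have hsmall := inter_small hk hq hq' hr hr' hBq hBq' hord hn1 hn2
      rw [h, Finset.inter_self] at hsmall
      have h3 := tri_card hk hq' hr' hBq'
      omega
    · exact hne heq
    · have hord := (pair_lt_iff (by omega) (by omega)).mp hgt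
      have hn1 : ¬(q' = q ∧ r' + 1 = r) := by
        intro hc
        exact hnc2 ((pair_succ_iff (by omega) (by omega) (by omega)).mpr (Or.inl hc))
      have hn2 : ¬(q' + 1 = q ∧ r' = 2*k ∧ r = 0) := by
        intro hc
        exact hnc2 ((pair_succ_iff (by omega) (by omega) (by omega)).mpr
          (Or.inr ⟨hc.1, by omega, hc.2.2⟩))
      have hsmall := inter_small hk hq' hq hr' hr hBq' hBq hord hn1 hn2
      rw [h, Finset.inter_self] at hsmall
      have h3 := tri_card hk hq' hr' hBq'
      omega

lemma range_of_lt {k v : ℕ} (h : v < 2*k^2+k-2+1) : v ≤ k*(2*k+1)-2 := by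
  have hNk : k*(2*k+1) = 2*k^2+k := by ring
  rw [hNk]
  generalize hP : 2*k^2+k = P at h ⊢
  omega

theorem construction (k : ℕ) (hk : 1 ≤ k) :
    ∃ X : Fin (2*k^2+k-2+1) → Finset (Fin (3*k+1)),
      Function.Injective X ∧ (∀ i, (X i).card = 3) ∧
      (∀ i j, ((X i \ X j).card = 1 ∧ (X j \ X i).card = 1) ↔
        (i.val + 1 = j.val ∨ j.val + 1 = i.val)) := by
  refine ⟨fun i => tri k i.val, ?_, ?_, ?_⟩
  · intro i j hij
    by_contra hne
    exact tri_ne hk (range_of_lt i.isLt) (range_of_lt j.isLt)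
      (fun hh => hne (Fin.ext hh)) hij
  · intro i
    exact tri_card' hk (range_of_lt i.isLt)
  · intro i j
    exact tri_main hk (range_of_lt i.isLt) (range_of_lt j.isLt)

end Main

/-! ### From a combinatorial path to a lower bound on `Hs` -/

lemma Hs_bddAbove (n d : ℕ) :
    BddAbove {δ | ∃ C : Finset (Finset (Fin n)),
      (∀ X ∈ C, X.card = d) ∧ (adjGraph C).Connected ∧ (adjGraph C).diam = δ} := by
  classical
  refine ⟨2^n, ?_⟩
  rintro δ ⟨C, hC3, hconn, rfl⟩
  haveI : Nonempty {Y // Y ∈ C} := hconn.nonempty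
  obtain ⟨u, v, huv⟩ := SimpleGraph.exists_dist_eq_diam (G := adjGraph C)
  obtain ⟨p, hpath, hlen⟩ := (hconn.preconnected u v).exists_path_of_dist
  have hcard := hpath.length_lt
  rw [Fintype.card_coe] at hcard
  have hle : C.card ≤ 2^n := by
    calc C.card ≤ (Finset.univ : Finset (Finset (Fin n))).card := Finset.card_le_univ C
      _ = 2^n := by rw [Finset.card_univ, Fintype.card_finset, Fintype.card_fin]
  omega

lemma le_Hs {n N : ℕ} (X : Fin (N+1) → Finset (Fin n))
    (hinj : Function.Injective X) (hcard : ∀ i, (X i).card = 3)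
    (hadj : ∀ i j, ((X i \ X j).card = 1 ∧ (X j \ X i).card = 1) ↔
      (i.val + 1 = j.val ∨ j.val + 1 = i.val)) :
    N ≤ Hs n 3 := by
  classical
  set C : Finset (Finset (Fin n)) := Finset.image X Finset.univ with hC
  set G := adjGraph C with hG
  have hmem : ∀ i, X i ∈ C := fun i => Finset.mem_image_of_mem _ (Finset.mem_univ i)
  set v : Fin (N+1) → {Y // Y ∈ C} := fun i => ⟨X i, hmem i⟩ with hv
  have hv_surj : Function.Surjective v := by
    rintro ⟨Y, hY⟩
    rw [hC, Finset.mem_image] at hY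
    obtain ⟨i, _, hi⟩ := hY
    exact ⟨i, Subtype.ext hi⟩
  have hv_inj : Function.Injective v := fun i j h => hinj (congrArg Subtype.val h)
  have hadj' : ∀ i j, G.Adj (v i) (v j) ↔ (i.val + 1 = j.val ∨ j.val + 1 = i.val) :=
    fun i j => by rw [hG]; show _ ∧ _ ↔ _; convert hadj i j
  have hreach0 : ∀ t (ht : t < N+1), G.Reachable (v 0) (v ⟨t, ht⟩) := by
    intro t
    induction t with
    | zero =>
      intro ht
      have he : (⟨0, ht⟩ : Fin (N+1)) = 0 := by ext; simp
      rw [he]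
    | succ s ih =>
      intro ht
      have hs := ih (by omega)
      have hstep : G.Adj (v ⟨s, by omega⟩) (v ⟨s+1, ht⟩) := (hadj' _ _).mpr (Or.inl rfl)
      exact hs.trans hstep.reachable
  have hreach : ∀ i : Fin (N+1), G.Reachable (v 0) (v i) := by
    intro i
    have h := hreach0 i.val i.isLt
    have : (⟨i.val, i.isLt⟩ : Fin (N+1)) = i := by ext; simp
    rwa [this] at h
  have hpre : G.Preconnected := by
    intro a b
    obtain ⟨i, rfl⟩ := hv_surj a
    obtain ⟨j, rfl⟩ := hv_surj b
    exact (hreach i).symm.trans (hreach j)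
  have hconn : G.Connected := (SimpleGraph.connected_iff G).mpr ⟨hpre, ⟨v 0⟩⟩
  -- index function
  set e : Fin (N+1) ≃ {Y // Y ∈ C} := Equiv.ofBijective v ⟨hv_inj, hv_surj⟩ with he
  set idx : {Y // Y ∈ C} → ℕ := fun Y => (e.symm Y).val with hidx
  have hidxv : ∀ i, idx (v i) = i.val := by
    intro i
    have h1 : e.symm (v i) = i := e.symm_apply_apply i
    rw [hidx]
    simp only []
    rw [h1]
  have hidx_adj : ∀ a b, G.Adj a b → (idx a + 1 = idx b ∨ idx b + 1 = idx a) := by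
    intro a b hab
    have ha : v (e.symm a) = a := e.apply_symm_apply a
    have hb : v (e.symm b) = b := e.apply_symm_apply b
    rw [← ha, ← hb] at hab
    have := (hadj' _ _).mp hab
    rw [hidx]
    exact this
  have walk_bound : ∀ (a b : {Y // Y ∈ C}) (p : G.Walk a b),
      idx b ≤ idx a + p.length ∧ idx a ≤ idx b + p.length := by
    intro a b p
    induction p with
    | nil => simp
    | cons hadjc p ih =>
      have hstep := hidx_adj _ _ hadjc
      simp only [SimpleGraph.Walk.length_cons]
      omega
  have hdist : N ≤ G.dist (v 0) (v (Fin.last N)) := by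
    obtain ⟨p, hp⟩ := (hreach (Fin.last N)).exists_walk_length_eq_dist
    have hb := (walk_bound _ _ p).1
    rw [hidxv, hidxv] at hb
    have h0 : (0 : Fin (N+1)).val = 0 := rfl
    have hl : (Fin.last N).val = N := rfl
    omega
  have hediam : G.ediam ≠ ⊤ := by
    haveI : Nonempty {Y // Y ∈ C} := ⟨v 0⟩
    obtain ⟨a, b, hab⟩ := G.exists_edist_eq_ediam_of_finite
    rw [← hab]
    exact SimpleGraph.edist_ne_top_iff_reachable.mpr (hpre a b)
  have hNdiam : N ≤ G.diam := le_trans hdist (SimpleGraph.dist_le_diam hediam)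
  have hmemS : G.diam ∈ {δ | ∃ C : Finset (Finset (Fin n)),
      (∀ X ∈ C, X.card = 3) ∧ (adjGraph C).Connected ∧ (adjGraph C).diam = δ} := by
    refine ⟨C, ?_, hconn, rfl⟩
    intro Y hY
    rw [hC, Finset.mem_image] at hY
    obtain ⟨i, _, rfl⟩ := hY
    exact hcard i
  have := le_csSup (Hs_bddAbove n 3) hmemS
  unfold Hs
  omega

lemma transfer {n n' N : ℕ} (h : n ≤ n') (X : Fin (N+1) → Finset (Fin n))
    (hinj : Function.Injective X) (hcard : ∀ i, (X i).card = 3)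
    (hadj : ∀ i j, ((X i \ X j).card = 1 ∧ (X j \ X i).card = 1) ↔
      (i.val + 1 = j.val ∨ j.val + 1 = i.val)) :
    ∃ X' : Fin (N+1) → Finset (Fin n'),
      Function.Injective X' ∧ (∀ i, (X' i).card = 3) ∧
      (∀ i j, ((X' i \ X' j).card = 1 ∧ (X' j \ X' i).card = 1) ↔
        (i.val + 1 = j.val ∨ j.val + 1 = i.val)) := by
  have hfi : Function.Injective (Fin.castLE h) := Fin.castLE_injective h
  refine ⟨fun i => (X i).image (Fin.castLE h), ?_, ?_, ?_⟩
  · intro i j hij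
    exact hinj (Finset.image_injective hfi hij)
  · intro i
    rw [Finset.card_image_of_injective _ hfi]
    exact hcard i
  · intro i j
    rw [← Finset.image_sdiff _ _ hfi, ← Finset.image_sdiff _ _ hfi,
      Finset.card_image_of_injective _ hfi, Finset.card_image_of_injective _ hfi]
    exact hadj i j

end DimTwoAux

open DimTwoAux in
/-- For every `n = 3k+1` with `k ≥ 1` there is a pure 2-dimensional complex on `n`
vertices whose adjacency graph is a path of length at least `2k² + k − 2`; and
consequently `H_s(n,3) ≥ (2/9)(n−3)²` for all `n ≥ 3`. -/
theorem dimension_two_lower_bound :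
    (∀ k : ℕ, 1 ≤ k →
      ∃ (N : ℕ) (X : Fin (N + 1) → Finset (Fin (3 * k + 1))),
        2 * k ^ 2 + k - 2 ≤ N ∧
        Function.Injective X ∧
        (∀ i, (X i).card = 3) ∧
        (∀ i j : Fin (N + 1),
          (((X i) \ (X j)).card = 1 ∧ ((X j) \ (X i)).card = 1) ↔
            (i.val + 1 = j.val ∨ j.val + 1 = i.val))) ∧
    (∀ n : ℕ, 3 ≤ n → (2 : ℚ) / 9 * ((n : ℚ) - 3) ^ 2 ≤ (Hs n 3 : ℚ)) := by
  constructor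
  · intro k hk
    obtain ⟨X, h1, h2, h3⟩ := construction k hk
    exact ⟨2*k^2+k-2, X, le_rfl, h1, h2, h3⟩
  · intro n hn
    rcases eq_or_lt_of_le hn with h3 | h4
    · rw [← h3]
      norm_num
    · by_cases h6 : n = 6
      · subst h6
        have h2 : 2 ≤ Hs 6 3 := by
          exact le_Hs (N := 2) (n := 6)
            ![({0,1,2} : Finset (Fin 6)), {0,1,3}, {1,3,4}]
            (by decide) (by decide) (by decide)
        have h2' : (2:ℚ) ≤ (Hs 6 3 : ℚ) := by exact_mod_cast h2
        norm_num
        linarith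
      · set k := (n-1)/3 with hkdef
        have hks : 1 ≤ k ∧ 3*k+1 ≤ n ∧ n ≤ 3*k+3 := by omega
        obtain ⟨hk1, hk2, hk3⟩ := hks
        obtain ⟨X, hinj, hcard, hadj⟩ := construction k hk1
        obtain ⟨X', hinj', hcard', hadj'⟩ := transfer hk2 X hinj hcard hadj
        have hHs : 2*k^2+k-2 ≤ Hs n 3 := le_Hs X' hinj' hcard' hadj'
        have hge : 2 ≤ 2*k^2+k := by nlinarith
        have hcast : ((2*k^2+k-2 : ℕ) : ℚ) = 2*(k:ℚ)^2+(k:ℚ)-2 := by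
          rw [Nat.cast_sub hge]
          push_cast
          ring
        have hQ : ((2*k^2+k-2:ℕ):ℚ) ≤ (Hs n 3 : ℚ) := Nat.cast_le.mpr hHs
        rw [hcast] at hQ
        have hkQ : (1:ℚ) ≤ (k:ℚ) := by exact_mod_cast hk1
        have hnk : (n:ℚ) ≤ 3*(k:ℚ)+3 := by exact_mod_cast hk3
        have hn3 : (3:ℚ) ≤ (n:ℚ) := by exact_mod_cast hn
        rcases eq_or_lt_of_le hk1 with hk1' | hk2'
        · have hk1'' : k = 1 := hk1'.symm
          have hn5 : n ≤ 5 := by omega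
          have hn5' : (n:ℚ) ≤ 5 := by exact_mod_cast hn5
          have hkQ1 : (k:ℚ) = 1 := by rw [hk1'']; norm_num
          rw [hkQ1] at hQ
          nlinarith
        · have hk2'' : (2:ℚ) ≤ (k:ℚ) := by exact_mod_cast hk2'
          have h1 : (n:ℚ) - 3 ≤ 3*(k:ℚ) := by linarith
          have h0 : (0:ℚ) ≤ (n:ℚ) - 3 := by linarith
          have hsq : ((n:ℚ)-3)^2 ≤ (3*(k:ℚ))^2 := by nlinarith
          nlinarith
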